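/- Descent lemma for projected coordinate descent: let h(x) = Σ_i h_i(x_i) with each h_i being L_i-smooth, and sample I ⊆ [n] of size τ with probability proportional to e_Iᵀ L⁻¹ e_I. Given x ∈ C = {x : Σ_i x_i = 0}, set y = x − G_I ∇h(x). Then 𝔼_I[h(y)] ≤ h(x) − (1/2)((τ−1)/(n−1)) ‖G_{[n]} ∇h(x)‖²_L. -/

import Mathlib

open Matrix BigOperators Finset

lemma card_filter_superset {α : Type*} [DecidableEq α] {s t : Finset α} (hts : t ⊆ s) {k : ℕ}
    (htk : t.card ≤ k) :
    ((powersetCard k s).filter (fun I => t ⊆ I)).card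
      = (s.card - t.card).choose (k - t.card) := by
  rw [← Finset.card_sdiff_of_subset hts, ← card_powersetCard (k - t.card) (s \ t)]
  apply Finset.card_bij (fun I _ => I \ t)
  · intro I hI
    simp only [mem_filter, mem_powersetCard] at hI ⊢
    exact ⟨Finset.sdiff_subset_sdiff hI.1.1 le_rfl,
      by rw [Finset.card_sdiff_of_subset hI.2, hI.1.2]⟩
  · intro a ha b hb hab
    simp only [mem_filter] at ha hb
    rw [← Finset.sdiff_union_of_subset ha.2, ← Finset.sdiff_union_of_subset hb.2, hab]
  · intro J hJ
    simp only [mem_powersetCard] at hJ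
    have hdisj : Disjoint J t := Finset.disjoint_left.mpr (fun a haJ hat => (Finset.mem_sdiff.mp (hJ.1 haJ)).2 hat)
    refine ⟨J ∪ t, ?_, ?_⟩
    · simp only [mem_filter, mem_powersetCard]
      refine ⟨⟨Finset.union_subset (hJ.1.trans (Finset.sdiff_subset)) hts, ?_⟩,
        Finset.subset_union_right⟩
      rw [Finset.card_union_of_disjoint hdisj, hJ.2]
      omega
    · rw [Finset.union_sdiff_cancel_right hdisj]

lemma sum_powersetCard_single {n τ : ℕ} (hτ : 1 ≤ τ) (hτn : τ ≤ n) (f : Fin n → ℝ) :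
    ∑ I ∈ powersetCard τ (univ : Finset (Fin n)), ∑ i ∈ I, f i
      = ((n-1).choose (τ-1) : ℝ) * ∑ i, f i := by
  have key : ∀ I : Finset (Fin n), ∑ i ∈ I, f i = ∑ i, if i ∈ I then f i else 0 := by
    intro I
    rw [Finset.sum_ite_mem, Finset.univ_inter]
  simp_rw [key]
  rw [Finset.sum_comm]
  have count : ∀ i : Fin n,
      ((powersetCard τ (univ : Finset (Fin n))).filter (fun I => i ∈ I)).card
        = (n-1).choose (τ-1) := by
    intro i
    have := card_filter_superset (t := {i}) (s := (univ : Finset (Fin n)))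
      (by simp) (k := τ) (by simpa using hτ)
    simpa [Finset.singleton_subset_iff] using this
  rw [Finset.mul_sum]
  refine Finset.sum_congr rfl fun i _ => ?_
  rw [← Finset.sum_filter, Finset.sum_const, count i, nsmul_eq_mul]
  simp

lemma sum_powersetCard_pair {n τ : ℕ} (hτ : 2 ≤ τ) (hτn : τ ≤ n) (F : Fin n → Fin n → ℝ)
    (hdiag : ∀ i, F i i = 0) :
    ∑ I ∈ powersetCard τ (univ : Finset (Fin n)), ∑ i ∈ I, ∑ j ∈ I, F i j
      = ((n-2).choose (τ-2) : ℝ) * ∑ i, ∑ j, F i j := by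
  have key : ∀ I : Finset (Fin n), ∑ i ∈ I, ∑ j ∈ I, F i j
      = ∑ i, ∑ j, if i ∈ I ∧ j ∈ I then F i j else 0 := by
    intro I
    have h1 : ∀ i, ∑ j ∈ I, F i j = ∑ j, if j ∈ I then F i j else 0 := fun i => by
      rw [Finset.sum_ite_mem, Finset.univ_inter]
    calc ∑ i ∈ I, ∑ j ∈ I, F i j
        = ∑ i, if i ∈ I then ∑ j ∈ I, F i j else 0 := by
          rw [Finset.sum_ite_mem, Finset.univ_inter]
      _ = ∑ i, ∑ j, if i ∈ I ∧ j ∈ I then F i j else 0 := by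
          refine Finset.sum_congr rfl fun i _ => ?_
          by_cases hi : i ∈ I
          · simp only [hi, if_true, true_and, h1]
          · simp [hi]
  simp_rw [key]
  rw [Finset.sum_comm]
  have swap2 : ∀ i : Fin n,
      ∑ I ∈ powersetCard τ (univ : Finset (Fin n)), ∑ j, (if i ∈ I ∧ j ∈ I then F i j else 0)
      = ∑ j, ∑ I ∈ powersetCard τ (univ : Finset (Fin n)), (if i ∈ I ∧ j ∈ I then F i j else 0) :=
    fun i => Finset.sum_comm
  simp_rw [swap2]
  rw [Finset.mul_sum]
  refine Finset.sum_congr rfl fun i _ => ?_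
  rw [Finset.mul_sum]
  refine Finset.sum_congr rfl fun j _ => ?_
  rw [← Finset.sum_filter, Finset.sum_const, nsmul_eq_mul]
  by_cases hij : i = j
  · subst hij; simp [hdiag i]
  · rw [if_pos ⟨Finset.mem_univ i, Finset.mem_univ j⟩]
    congr 1
    have hcard : ({i, j} : Finset (Fin n)).card = 2 := by
      rw [Finset.card_insert_of_notMem (by simpa using hij), Finset.card_singleton]
    have := card_filter_superset (t := {i, j}) (s := (univ : Finset (Fin n)))
      (by simp) (k := τ) (by rw [hcard]; exact hτ)
    rw [hcard, Finset.card_univ, Fintype.card_fin] at this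
    rw [← this]
    have hset : filter (fun a => i ∈ a ∧ j ∈ a) (powersetCard τ (univ : Finset (Fin n)))
        = filter (fun I => ({i, j} : Finset (Fin n)) ⊆ I) (powersetCard τ univ) := by
      ext I
      simp [Finset.mem_filter, Finset.insert_subset_iff, Finset.singleton_subset_iff]
    rw [hset]

/-- Descent lemma for projected coordinate descent: for separable h with
L_i-smooth components, feasible x and y = x − G_I ∇h(x) with I sampled with
probability ∝ e_Iᵀ L⁻¹ e_I among size-τ subsets,
`𝔼_I[h(y)] ≤ h(x) − (1/2)((τ−1)/(n−1)) ‖G_{[n]} ∇h(x)‖²_L`. -/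
theorem stmt11 {n : ℕ} (τ : ℕ) (hτ : 2 ≤ τ) (hτn : τ ≤ n)
    (L : Fin n → ℝ) (hL : ∀ i, 0 < L i)
    (h : Fin n → ℝ → ℝ) (g : Fin n → ℝ → ℝ)
    (hderiv : ∀ i x, HasDerivAt (h i) (g i x) x)
    (hsmooth : ∀ i x y, h i x ≤ h i y + g i y * (x - y) + L i / 2 * (x - y) ^ 2)
    (x : Fin n → ℝ) (hx : ∑ i, x i = 0) :
    let eI : Finset (Fin n) → (Fin n → ℝ) := fun I i => if i ∈ I then 1 else 0
    let c : Finset (Fin n) → ℝ := fun I => ∑ i ∈ I, (L i)⁻¹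
    let v : Finset (Fin n) → (Fin n → ℝ) := fun I i => (L i)⁻¹ * eI I i
    let G : Finset (Fin n) → Matrix (Fin n) (Fin n) ℝ := fun I =>
      Matrix.diagonal (fun i => eI I i * (L i)⁻¹) -
        (c I)⁻¹ • Matrix.vecMulVec (v I) (v I)
    let Psets := Finset.powersetCard τ (Finset.univ : Finset (Fin n))
    let p : Finset (Fin n) → ℝ := fun I => c I / ∑ J ∈ Psets, c J
    let H : (Fin n → ℝ) → ℝ := fun z => ∑ i, h i (z i)
    let gradH : (Fin n → ℝ) → (Fin n → ℝ) := fun z j => g j (z j)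
    let quadL : (Fin n → ℝ) → ℝ := fun w => w ⬝ᵥ (Matrix.diagonal L *ᵥ w)
    ∑ I ∈ Psets, p I * H (x - G I *ᵥ gradH x)
      ≤ H x - 1 / 2 * (((τ : ℝ) - 1) / ((n : ℝ) - 1)) * quadL (G Finset.univ *ᵥ gradH x) := by
  intro eI c v G Psets p H gradH quadL
  have hn2 : 2 ≤ n := le_trans hτ hτn
  have hLne : ∀ i, L i ≠ 0 := fun i => (hL i).ne'
  -- notation
  set w : Fin n → ℝ := fun j => g j (x j) with hw
  have hgrad : gradH x = w := rfl
  set T : Finset (Fin n) → ℝ := fun I => ∑ j ∈ I, (L j)⁻¹ * w j with hT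
  set Q : Finset (Fin n) → ℝ := fun I => (∑ i ∈ I, (L i)⁻¹ * w i ^ 2) - (c I)⁻¹ * T I ^ 2 with hQ
  -- c is positive on nonempty sets
  have hcpos : ∀ I : Finset (Fin n), I.Nonempty → 0 < c I := by
    intro I hI
    exact Finset.sum_pos (fun i _ => inv_pos.mpr (hL i)) hI
  have hcnonneg : ∀ I : Finset (Fin n), 0 ≤ c I :=
    fun I => Finset.sum_nonneg fun i _ => (inv_pos.mpr (hL i)).le
  -- explicit formula for G I *ᵥ w
  have hd : ∀ (I : Finset (Fin n)) (i : Fin n),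
      (G I *ᵥ w) i = if i ∈ I then (L i)⁻¹ * w i - (c I)⁻¹ * ((L i)⁻¹ * T I) else 0 := by
    intro I i
    have hvT : ∑ j, v I j * w j = T I := by
      have e : ∀ j, v I j * w j = if j ∈ I then (L j)⁻¹ * w j else 0 := by
        intro j
        by_cases hj : j ∈ I
        · have h1 : eI I j = 1 := if_pos hj
          show (L j)⁻¹ * eI I j * w j = _
          rw [h1, if_pos hj]; ring
        · have h1 : eI I j = 0 := if_neg hj
          show (L j)⁻¹ * eI I j * w j = _
          rw [h1, if_neg hj]; ring
      simp_rw [e]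
      rw [Finset.sum_ite_mem univ I, Finset.univ_inter, hT]
    have key : (G I *ᵥ w) i
        = eI I i * (L i)⁻¹ * w i - (c I)⁻¹ * (v I i * ∑ j, v I j * w j) := by
      show (G I *ᵥ w) i = _
      rw [Matrix.sub_mulVec, Pi.sub_apply, Matrix.mulVec_diagonal,
        Matrix.smul_mulVec, Pi.smul_apply, smul_eq_mul]
      congr 1
      rw [Matrix.mulVec, dotProduct]
      simp_rw [Matrix.vecMulVec_apply, mul_assoc]
      rw [← Finset.mul_sum]
    rw [key, hvT]
    by_cases hi : i ∈ I
    · have h1 : eI I i = 1 := if_pos hi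
      have h2 : v I i = (L i)⁻¹ * eI I i := rfl
      rw [if_pos hi, h2, h1]; ring
    · have h1 : eI I i = 0 := if_neg hi
      have h2 : v I i = (L i)⁻¹ * eI I i := rfl
      rw [if_neg hi, h2, h1]; ring
  -- the two quadratic identities
  have hwd : ∀ I : Finset (Fin n), ∑ i, w i * (G I *ᵥ w) i = Q I := by
    intro I
    simp_rw [hd, mul_ite, mul_zero]
    rw [Finset.sum_ite_mem univ I, Finset.univ_inter]
    have e : ∀ i, w i * ((L i)⁻¹ * w i - (c I)⁻¹ * ((L i)⁻¹ * T I))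
        = (L i)⁻¹ * w i ^ 2 - (c I)⁻¹ * T I * ((L i)⁻¹ * w i) := fun i => by ring
    simp_rw [e, Finset.sum_sub_distrib, ← Finset.mul_sum]
    simp only [hQ, hT]
    ring
  have hLd : ∀ I : Finset (Fin n), I.Nonempty → ∑ i, L i * (G I *ᵥ w) i ^ 2 = Q I := by
    intro I hI
    have hc := (hcpos I hI).ne'
    have hcc : c I * (c I)⁻¹ = 1 := mul_inv_cancel₀ hc
    simp_rw [hd]
    have e : ∀ i, L i * (if i ∈ I then (L i)⁻¹ * w i - (c I)⁻¹ * ((L i)⁻¹ * T I) else 0) ^ 2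
        = if i ∈ I then (L i)⁻¹ * w i ^ 2 - 2 * ((c I)⁻¹ * T I) * ((L i)⁻¹ * w i)
            + ((c I)⁻¹ * T I) ^ 2 * (L i)⁻¹ else 0 := by
      intro i
      by_cases hi : i ∈ I
      · rw [if_pos hi, if_pos hi]
        have keyL : L i * (L i)⁻¹ = 1 := mul_inv_cancel₀ (hLne i)
        linear_combination ((L i)⁻¹ * (w i - (c I)⁻¹ * T I) ^ 2) * keyL
      · rw [if_neg hi, if_neg hi]; ring
    simp_rw [e]
    rw [Finset.sum_ite_mem univ I, Finset.univ_inter]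
    rw [Finset.sum_add_distrib, Finset.sum_sub_distrib, ← Finset.mul_sum, ← Finset.mul_sum]
    have hTI : ∑ i ∈ I, (L i)⁻¹ * w i = T I := by rw [hT]
    have hcI : ∑ i ∈ I, (L i)⁻¹ = c I := rfl
    rw [hTI, hcI]
    simp only [hQ, hT]
    linear_combination ((c I)⁻¹ * (∑ j ∈ I, (L j)⁻¹ * w j) ^ 2) * hcc
  -- per-set descent
  have hdesc : ∀ I : Finset (Fin n), I.Nonempty →
      H (x - G I *ᵥ gradH x) ≤ H x - 1 / 2 * Q I := by
    intro I hI
    have hstep : ∀ i, h i (x i - (G I *ᵥ w) i)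
        ≤ h i (x i) - w i * (G I *ᵥ w) i + L i / 2 * ((G I *ᵥ w) i) ^ 2 := by
      intro i
      have h1 := hsmooth i (x i - (G I *ᵥ w) i) (x i)
      have e1 : x i - (G I *ᵥ w) i - x i = -((G I *ᵥ w) i) := by ring
      rw [e1] at h1
      calc h i (x i - (G I *ᵥ w) i)
          ≤ h i (x i) + g i (x i) * -((G I *ᵥ w) i) + L i / 2 * (-((G I *ᵥ w) i)) ^ 2 := h1
        _ = h i (x i) - w i * (G I *ᵥ w) i + L i / 2 * ((G I *ᵥ w) i) ^ 2 := by
            rw [hw]; ring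
    have hHsum : H (x - G I *ᵥ gradH x) = ∑ i, h i (x i - (G I *ᵥ w) i) := rfl
    rw [hHsum]
    calc ∑ i, h i (x i - (G I *ᵥ w) i)
        ≤ ∑ i, (h i (x i) - w i * (G I *ᵥ w) i + L i / 2 * ((G I *ᵥ w) i) ^ 2) :=
          Finset.sum_le_sum fun i _ => hstep i
      _ = H x - ∑ i, w i * (G I *ᵥ w) i + 1 / 2 * ∑ i, L i * (G I *ᵥ w) i ^ 2 := by
          rw [Finset.sum_add_distrib, Finset.sum_sub_distrib, Finset.mul_sum]
          congr 1
          refine Finset.sum_congr rfl fun i _ => ?_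
          ring
      _ = H x - 1 / 2 * Q I := by rw [hwd I, hLd I hI]; ring
  -- assembly
  haveI : Nonempty (Fin n) := ⟨⟨0, by omega⟩⟩
  have hne : (univ : Finset (Fin n)).Nonempty := Finset.univ_nonempty
  have hSpos : 0 < c univ := hcpos _ hne
  have hccu : c univ * (c univ)⁻¹ = 1 := mul_inv_cancel₀ hSpos.ne'
  have hDsum : ∑ J ∈ Psets, c J = ((n-1).choose (τ-1) : ℝ) * c univ :=
    sum_powersetCard_single (by omega) hτn (fun i => (L i)⁻¹)
  have hK1pos : (0:ℝ) < ((n-1).choose (τ-1) : ℝ) := by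
    exact_mod_cast Nat.choose_pos (by omega : τ - 1 ≤ n - 1)
  have hDpos : 0 < ∑ J ∈ Psets, c J := by
    rw [hDsum]; exact mul_pos hK1pos hSpos
  have hpI : ∀ I, p I = c I / (∑ J ∈ Psets, c J) := fun I => rfl
  have hpnonneg : ∀ I, 0 ≤ p I := fun I => by
    rw [hpI]; exact div_nonneg (hcnonneg I) hDpos.le
  have hIone : ∑ I ∈ Psets, p I = 1 := by
    have : ∑ I ∈ Psets, p I = (∑ I ∈ Psets, c I) / (∑ J ∈ Psets, c J) := by
      rw [Finset.sum_div]
    rw [this, div_self hDpos.ne']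
  have hmemne : ∀ I ∈ Psets, I.Nonempty := by
    intro I hI
    have h1 : I.card = τ := (Finset.mem_powersetCard.mp hI).2
    exact Finset.card_pos.mp (by omega)
  have hQuniv : quadL (G univ *ᵥ gradH x) = Q univ := by
    show (G univ *ᵥ w) ⬝ᵥ (Matrix.diagonal L *ᵥ (G univ *ᵥ w)) = Q univ
    rw [dotProduct]
    have e : ∀ i, (G univ *ᵥ w) i * (Matrix.diagonal L *ᵥ (G univ *ᵥ w)) i
        = L i * (G univ *ᵥ w) i ^ 2 := by
      intro i; rw [Matrix.mulVec_diagonal]; ring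
    simp_rw [e]
    exact hLd univ hne
  -- averaging of Q over Psets
  have hcQ : ∑ I ∈ Psets, c I * Q I
      = ((n-2).choose (τ-2) : ℝ) * (c univ * Q univ) := by
    have hstep1 : ∀ I : Finset (Fin n), I.Nonempty → c I * Q I
        = ∑ i ∈ I, ∑ j ∈ I, ((L i)⁻¹ * ((L j)⁻¹ * w j ^ 2)
            - ((L i)⁻¹ * w i) * ((L j)⁻¹ * w j)) := by
      intro I hI
      have hcc : c I * (c I)⁻¹ = 1 := mul_inv_cancel₀ (hcpos I hI).ne'
      have h1 : c I * (∑ j ∈ I, (L j)⁻¹ * w j ^ 2)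
          = ∑ i ∈ I, ∑ j ∈ I, (L i)⁻¹ * ((L j)⁻¹ * w j ^ 2) :=
        Finset.sum_mul_sum I I _ _
      have h2 : T I * T I
          = ∑ i ∈ I, ∑ j ∈ I, ((L i)⁻¹ * w i) * ((L j)⁻¹ * w j) := by
        rw [hT]; exact Finset.sum_mul_sum I I _ _
      calc c I * Q I = c I * (∑ j ∈ I, (L j)⁻¹ * w j ^ 2) - T I * T I := by
            simp only [hQ]
            linear_combination (- T I ^ 2) * hcc
        _ = _ := by
            rw [h1, h2, ← Finset.sum_sub_distrib]
            exact Finset.sum_congr rfl fun i _ => (Finset.sum_sub_distrib _ _).symm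
    calc ∑ I ∈ Psets, c I * Q I
        = ∑ I ∈ Psets, ∑ i ∈ I, ∑ j ∈ I, ((L i)⁻¹ * ((L j)⁻¹ * w j ^ 2)
            - ((L i)⁻¹ * w i) * ((L j)⁻¹ * w j)) :=
          Finset.sum_congr rfl fun I hI => hstep1 I (hmemne I hI)
      _ = ((n-2).choose (τ-2) : ℝ) * ∑ i, ∑ j, ((L i)⁻¹ * ((L j)⁻¹ * w j ^ 2)
            - ((L i)⁻¹ * w i) * ((L j)⁻¹ * w j)) :=
          sum_powersetCard_pair hτ hτn _ (fun i => by ring)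
      _ = ((n-2).choose (τ-2) : ℝ) * (c univ * Q univ) := by
          rw [← hstep1 univ hne]
  -- expected value of Q
  have hpQ : ∑ I ∈ Psets, p I * Q I = (((τ:ℝ)-1)/((n:ℝ)-1)) * Q univ := by
    have hsum : ∑ I ∈ Psets, p I * Q I
        = (∑ I ∈ Psets, c I * Q I) / (∑ J ∈ Psets, c J) := by
      rw [Finset.sum_div]
      exact Finset.sum_congr rfl fun I _ => by rw [hpI]; ring
    rw [hsum, hcQ, hDsum]
    have e1 : n - 2 + 1 = n - 1 := by omega
    have e2 : τ - 2 + 1 = τ - 1 := by omega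
    have hnat : (n - 2 + 1) * (n-2).choose (τ-2) = (n-2+1).choose (τ-2+1) * (τ-2+1) :=
      Nat.add_one_mul_choose_eq (n-2) (τ-2)
    rw [e1, e2] at hnat
    have c1 : ((n - 1 : ℕ) : ℝ) = (n:ℝ) - 1 := by
      push_cast [Nat.cast_sub (by omega : 1 ≤ n)]; ring
    have c2 : ((τ - 1 : ℕ) : ℝ) = (τ:ℝ) - 1 := by
      push_cast [Nat.cast_sub (by omega : 1 ≤ τ)]; ring
    have hreal : ((n:ℝ) - 1) * ((n-2).choose (τ-2) : ℝ)
        = ((n-1).choose (τ-1) : ℝ) * ((τ:ℝ) - 1) := by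
      rw [← c1, ← c2]
      exact_mod_cast hnat
    have hn1 : (n:ℝ) - 1 ≠ 0 := by
      have : (2:ℝ) ≤ (n:ℝ) := by exact_mod_cast hn2
      linarith
    rw [div_eq_iff (mul_pos hK1pos hSpos).ne', div_mul_eq_mul_div, div_mul_eq_mul_div, eq_div_iff hn1]
    linear_combination (c univ * Q univ) * hreal
  -- final computation
  calc ∑ I ∈ Psets, p I * H (x - G I *ᵥ gradH x)
      ≤ ∑ I ∈ Psets, p I * (H x - 1 / 2 * Q I) :=
        Finset.sum_le_sum fun I hI =>
          mul_le_mul_of_nonneg_left (hdesc I (hmemne I hI)) (hpnonneg I)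
    _ = (∑ I ∈ Psets, p I) * H x - 1 / 2 * ∑ I ∈ Psets, p I * Q I := by
        rw [Finset.sum_mul, Finset.mul_sum, ← Finset.sum_sub_distrib]
        exact Finset.sum_congr rfl fun I _ => by ring
    _ = H x - 1 / 2 * (((τ:ℝ) - 1) / ((n:ℝ) - 1)) * quadL (G Finset.univ *ᵥ gradH x) := by
        rw [hIone, one_mul, hpQ, hQuniv]
        ring
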